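/- The single-layer Stokes velocity generated on the unit circle by a force proportional to ∂²_θX⋆ vanishes: for every θ ∈ ℝ, the function η ↦ G(X⋆(θ) − X⋆(η))·X⋆(η) is Lebesgue integrable on (−π,π) and ∫_{−π}^{π} G(X⋆(θ) − X⋆(η)) · X⋆''(η) dη = 0 ∈ ℝ², where X⋆''(η) = −X⋆(η). -/

import Mathlib

open Real intervalIntegral

namespace SLaux


noncomputable def L (u : ℝ) : ℝ := Real.log (2 - 2 * Real.cos u)

lemma two_sub_two_cos (u : ℝ) : 2 - 2 * Real.cos u = (2 * Real.sin (u/2)) ^ 2 := by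
  have h1 : Real.cos u = 2 * Real.cos (u/2) ^ 2 - 1 := by
    rw [← Real.cos_two_mul]; congr 1; ring
  have h2 := Real.sin_sq_add_cos_sq (u/2)
  nlinarith

lemma L_even (u : ℝ) : L (-u) = L u := by simp [L]

lemma L_periodic : Function.Periodic L (2*π) := fun x => by
  simp [L, Real.cos_add_two_pi]

lemma L_bound {u : ℝ} (h0 : 0 < u) (hπ : u ≤ π) :
    |L u| ≤ 4 * u ^ (-(1/2) : ℝ) + (2*u + 1) := by
  simp only [L]
  have hπpos := Real.pi_pos
  have hs := two_sub_two_cos u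
  have hsin_pos : 0 < Real.sin (u/2) :=
    Real.sin_pos_of_pos_of_lt_pi (by linarith) (by linarith)
  have hup : Real.sin (u/2) ≤ u/2 := Real.sin_le (by linarith)
  have hlow : u / π ≤ Real.sin (u/2) := by
    have h := Real.mul_le_sin (x := u/2) (by linarith) (by linarith)
    calc u/π = 2/π * (u/2) := by ring
    _ ≤ Real.sin (u/2) := h
  have hs_low : (2*(u/π))^2 ≤ 2 - 2*Real.cos u := by
    rw [hs]; have hu' : 0 < u / π := div_pos h0 hπpos
    nlinarith
  have hs_high : 2 - 2*Real.cos u ≤ u^2 := by rw [hs]; nlinarith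
  have hs_pos : 0 < 2 - 2*Real.cos u := by rw [hs]; nlinarith
  have hL_up : Real.log (2 - 2 * Real.cos u) ≤ 2 * Real.log u := by
    have h := Real.log_le_log hs_pos hs_high
    have : Real.log (u^2) = 2 * Real.log u := by
      rw [Real.log_pow]; push_cast; ring
    rw [this] at h; exact h
  have hL_low : 2 * Real.log u - 1 ≤ Real.log (2 - 2 * Real.cos u) := by
    have hq : (0:ℝ) < (2*(u/π))^2 := by positivity
    have h := Real.log_le_log hq hs_low
    have h2 : Real.log ((2*(u/π))^2) = 2 * Real.log (2*(u/π)) := by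
      rw [Real.log_pow]; push_cast; ring
    have h3 : Real.log (2*(u/π)) = Real.log 2 + Real.log u - Real.log π := by
      rw [Real.log_mul two_ne_zero (by positivity), Real.log_div (ne_of_gt h0) (ne_of_gt hπpos)]
      ring
    have hπ2 : Real.log π - Real.log 2 ≤ 1/2 := by
      rw [← Real.log_div (ne_of_gt hπpos) two_ne_zero]
      have hlt : π / 2 < Real.exp (1/2) := by
        have hd9 := Real.exp_one_gt_d9
        have hsq : Real.exp (1/2) * Real.exp (1/2) = Real.exp 1 := by
          rw [← Real.exp_add]; norm_num
        have hexp_pos := Real.exp_pos (1/2)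
        nlinarith [Real.pi_lt_d2]
      have := Real.log_lt_log (by positivity) hlt
      rw [Real.log_exp] at this; linarith
    rw [h2, h3] at h; linarith
  have habs : |Real.log u| ≤ 2 * u ^ (-(1/2):ℝ) + u := by
    have hrpow : u ^ (-(1/2):ℝ) = (Real.sqrt u)⁻¹ := by
      rw [Real.rpow_neg h0.le, ← Real.sqrt_eq_rpow]
    have hsq_pos : 0 < Real.sqrt u := Real.sqrt_pos.mpr h0
    rcases le_or_gt u 1 with h1 | h1
    · rw [abs_of_nonpos (Real.log_nonpos h0.le h1)]
      have hl : -Real.log u = 2 * Real.log (Real.sqrt u)⁻¹ := by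
        rw [Real.log_inv, Real.log_sqrt h0.le]; ring
      have hle : Real.log (Real.sqrt u)⁻¹ ≤ (Real.sqrt u)⁻¹ - 1 :=
        Real.log_le_sub_one_of_pos (inv_pos.mpr hsq_pos)
      rw [hl, hrpow]; linarith
    · rw [abs_of_nonneg (Real.log_nonneg h1.le)]
      have h2 := Real.log_le_sub_one_of_pos h0
      have h3 : (0:ℝ) ≤ 2 * u ^ (-(1/2):ℝ) := by positivity
      linarith
  have hcomb : |Real.log (2 - 2 * Real.cos u)| ≤ 2 * |Real.log u| + 1 := by
    rw [abs_le]; constructor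
    · have := neg_abs_le (Real.log u); linarith
    · have := le_abs_self (Real.log u); linarith
  calc |Real.log (2 - 2 * Real.cos u)| ≤ 2 * |Real.log u| + 1 := hcomb
  _ ≤ 2 * (2 * u ^ (-(1/2):ℝ) + u) + 1 := by linarith
  _ = 4 * u ^ (-(1/2):ℝ) + (2*u + 1) := by ring

lemma L_measurable : Measurable L :=
  Real.measurable_log.comp (by fun_prop)

lemma L_ii_base : IntervalIntegrable L MeasureTheory.volume 0 π := by
  have hg : IntervalIntegrable (fun u : ℝ => 4 * u ^ (-(1/2):ℝ) + (2*u+1))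
      MeasureTheory.volume 0 π :=
    ((intervalIntegrable_rpow' (by norm_num)).const_mul 4).add
      (((continuous_const.mul continuous_id').add continuous_const).intervalIntegrable _ _)
  apply hg.mono_fun' L_measurable.aestronglyMeasurable
  rw [Set.uIoc_of_le Real.pi_pos.le]
  refine (MeasureTheory.ae_restrict_iff' measurableSet_Ioc).mpr ?_
  refine Filter.Eventually.of_forall fun x hx => ?_
  exact L_bound hx.1 hx.2


lemma L_ii_sym : IntervalIntegrable L MeasureTheory.volume (-π) π := by
  have h2 : IntervalIntegrable L MeasureTheory.volume (-π) 0 := by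
    have h := ((IntervalIntegrable.iff_comp_neg (f := L) (by simp)).mp L_ii_base).symm
    have he : (fun x : ℝ => L (-x)) = L := funext fun x => L_even x
    rw [he] at h
    simpa using h
  exact h2.trans L_ii_base

lemma L_ii_shift (k : ℤ) :
    IntervalIntegrable L MeasureTheory.volume (-π + k*(2*π)) (π + k*(2*π)) := by
  have h := L_ii_sym.comp_sub_right (k * (2*π))
  have he : (fun x : ℝ => L (x - k*(2*π))) = L := by
    funext x; simp [L, Real.cos_sub_int_mul_two_pi]
  rw [he] at h
  convert h using 2 <;> ring

lemma L_ii_big (n : ℕ) :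
    IntervalIntegrable L MeasureTheory.volume (-π - n*(2*π)) (π + n*(2*π)) := by
  induction n with
  | zero => simpa using L_ii_sym
  | succ n ih =>
      have hr := L_ii_shift (n+1)
      have hl := L_ii_shift (-(n+1))
      have e1 : (-π + (((n:ℤ)+1) : ℤ)*(2*π) : ℝ) = π + n*(2*π) := by push_cast; ring
      have e2 : ((π : ℝ) + (((n:ℤ)+1) : ℤ)*(2*π)) = π + (n+1)*(2*π) := by push_cast; ring
      have e3 : ((-π : ℝ) + ((-(n+1) : ℤ)) * (2*π)) = -π - (n+1)*(2*π) := by push_cast; ring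
      have e4 : ((π : ℝ) + ((-(n+1) : ℤ)) * (2*π)) = -π - n*(2*π) := by push_cast; ring
      have hr' : IntervalIntegrable L MeasureTheory.volume (π + n*(2*π)) (π + (n+1)*(2*π)) := by
        rw [← e1, ← e2]; exact_mod_cast hr
      have hl' : IntervalIntegrable L MeasureTheory.volume (-π - (n+1)*(2*π)) (-π - n*(2*π)) := by
        rw [← e3, ← e4]; exact_mod_cast hl
      have := (hl'.trans ih).trans hr'
      convert this using 2 <;> push_cast <;> ring

lemma L_ii (a b : ℝ) : IntervalIntegrable L MeasureTheory.volume a b := by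
  obtain ⟨n, hn⟩ := exists_nat_ge (max |a| |b|)
  have hπpos := Real.pi_pos
  have hnn : (0:ℝ) ≤ (n:ℝ) := Nat.cast_nonneg n
  have hn' : (n:ℝ) ≤ π + n*(2*π) := by nlinarith [Real.pi_gt_three]
  have hmem : ∀ x : ℝ, |x| ≤ n → x ∈ Set.uIcc (-π - n*(2*π)) (π + n*(2*π)) := by
    intro x hx
    rw [Set.uIcc_of_le (by nlinarith [Real.pi_gt_three])]
    have := abs_le.mp hx
    constructor <;> nlinarith [Real.pi_gt_three]
  refine (L_ii_big n).mono_set ?_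
  apply Set.uIcc_subset_uIcc
  · exact hmem a (le_trans (le_max_left _ _) hn)
  · exact hmem b (le_trans (le_max_right _ _) hn)


lemma L_cos_ii (a b : ℝ) :
    IntervalIntegrable (fun u => L u * Real.cos u) MeasureTheory.volume a b :=
  (L_ii a b).mul_continuousOn continuous_cos.continuousOn

lemma L_sin_ii (a b : ℝ) :
    IntervalIntegrable (fun u => L u * Real.sin u) MeasureTheory.volume a b :=
  (L_ii a b).mul_continuousOn continuous_sin.continuousOn

lemma J_half : ∫ u in (0:ℝ)..π, L u * Real.cos u = -π := by
  set g : ℝ → ℝ := fun u => Real.sin u * L u - (u + Real.sin u) with hg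
  have hπpos := Real.pi_pos
  -- continuity of g on [0, π]
  have hgh : ∀ u ∈ Set.uIcc (0:ℝ) π, g u =
      2 * Real.cos (u/2) * ((2 * Real.sin (u/2)) * Real.log (2 * Real.sin (u/2)))
        - (u + Real.sin u) := by
    intro u hu
    rw [Set.uIcc_of_le hπpos.le] at hu
    rcases eq_or_lt_of_le hu.1 with h0 | h0
    · simp [g, L, ← h0]
    · have hsin_pos : 0 < Real.sin (u/2) :=
        Real.sin_pos_of_pos_of_lt_pi (by linarith) (by linarith [hu.2])
      have hL : L u = 2 * Real.log (2 * Real.sin (u/2)) := by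
        rw [L, two_sub_two_cos u, Real.log_pow]; push_cast; ring
      have hsin2 : Real.sin u = 2 * Real.sin (u/2) * Real.cos (u/2) := by
        rw [← Real.sin_two_mul]; congr 1; ring
      have hgu : g u = Real.sin u * L u - (u + Real.sin u) := rfl
      rw [hgu, hL]
      nth_rewrite 1 [hsin2]
      ring
  have hcont : ContinuousOn g (Set.uIcc (0:ℝ) π) := by
    have h1 : Continuous fun u : ℝ => (2 * Real.sin (u/2)) * Real.log (2 * Real.sin (u/2)) :=
      Real.continuous_mul_log.comp (by fun_prop)
    have h2 : Continuous fun u : ℝ =>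
        2 * Real.cos (u/2) * ((2 * Real.sin (u/2)) * Real.log (2 * Real.sin (u/2)))
          - (u + Real.sin u) :=
      ((continuous_const.mul (continuous_cos.comp (by fun_prop))).mul h1).sub
        (continuous_id.add continuous_sin)
    exact h2.continuousOn.congr fun u hu => hgh u hu
  have hderiv : ∀ u ∈ Set.Ioo (min (0:ℝ) π) (max (0:ℝ) π),
      HasDerivWithinAt g (L u * Real.cos u) (Set.Ioi u) u := by
    intro u hu
    rw [min_eq_left hπpos.le, max_eq_right hπpos.le] at hu
    have hsin_pos : 0 < Real.sin (u/2) :=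
      Real.sin_pos_of_pos_of_lt_pi (by linarith [hu.1]) (by linarith [hu.2])
    have hs_pos : 0 < 2 - 2*Real.cos u := by
      rw [two_sub_two_cos u]; nlinarith
    have hsderiv : HasDerivAt (fun u : ℝ => 2 - 2 * Real.cos u) (2 * Real.sin u) u := by
      simpa using (HasDerivAt.const_sub 2 ((Real.hasDerivAt_cos u).const_mul 2))
    have hlog : HasDerivAt L ((2 * Real.sin u) / (2 - 2*Real.cos u)) u :=
      hsderiv.log (ne_of_gt hs_pos)
    have hmul : HasDerivAt (fun u => Real.sin u * L u)
        (Real.cos u * L u + Real.sin u * ((2 * Real.sin u) / (2 - 2*Real.cos u))) u :=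
      (Real.hasDerivAt_sin u).mul hlog
    have hid : HasDerivAt (fun u : ℝ => u + Real.sin u) (1 + Real.cos u) u :=
      (hasDerivAt_id u).add (Real.hasDerivAt_sin u)
    have h := hmul.sub hid
    have heq : Real.cos u * L u + Real.sin u * ((2 * Real.sin u) / (2 - 2*Real.cos u))
        - (1 + Real.cos u) = L u * Real.cos u := by
      have hkey : Real.sin u * ((2 * Real.sin u) / (2 - 2*Real.cos u)) = 1 + Real.cos u := by
        rw [← mul_div_assoc, div_eq_iff (ne_of_gt hs_pos)]
        nlinarith [Real.sin_sq_add_cos_sq u]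
      rw [hkey]; ring
    rw [heq] at h
    exact h.hasDerivWithinAt
  have := integral_eq_sub_of_hasDeriv_right hcont hderiv (L_cos_ii 0 π)
  rw [this]
  simp [g, L]

lemma J_cos : ∫ u in (-π)..π, L u * Real.cos u = -(2*π) := by
  rw [← integral_add_adjacent_intervals (L_cos_ii (-π) 0) (L_cos_ii 0 π)]
  have h := integral_comp_neg (fun x => L x * Real.cos x) (a := (0:ℝ)) (b := π)
  have he : (fun x : ℝ => L (-x) * Real.cos (-x)) = fun x => L x * Real.cos x := by
    funext x; rw [L_even, Real.cos_neg]
  rw [he] at h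
  rw [neg_zero] at h
  rw [← h, J_half]
  ring

lemma J_sin : ∫ u in (-π)..π, L u * Real.sin u = 0 := by
  have h := integral_comp_neg (fun x => L x * Real.sin x) (a := (-π:ℝ)) (b := π)
  rw [neg_neg] at h
  have he : (fun x : ℝ => L (-x) * Real.sin (-x)) = fun x => -(L x * Real.sin x) := by
    funext x; rw [L_even, Real.sin_neg]; ring
  rw [he, intervalIntegral.integral_neg] at h
  linarith


lemma L_shift_ii (θ : ℝ) :
    IntervalIntegrable (fun η => SLaux.L (θ - η)) MeasureTheory.volume (-π) π := by
  have h := (L_ii (θ + π) (θ - π)).comp_sub_left θ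
  rw [show θ - (θ + π) = -π by ring, show θ - (θ - π) = π by ring] at h
  exact h

lemma I_cos (θ : ℝ) :
    ∫ η in (-π)..π, SLaux.L (θ - η) * Real.cos η = -(2*π) * Real.cos θ := by
  have hgoal : ∀ η : ℝ, SLaux.L (θ - η) * Real.cos η = (fun u => L u * Real.cos (θ - u)) (θ - η) := by
    intro η; simp only [sub_sub_cancel]
  have h0 : (∫ η in (-π)..π, SLaux.L (θ - η) * Real.cos η)
      = ∫ η in (-π)..π, (fun u => L u * Real.cos (θ - u)) (θ - η) := by
    congr 1; funext η; exact hgoal η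
  rw [h0, integral_comp_sub_left (fun u => L u * Real.cos (θ - u)) θ]
  have hH : Function.Periodic (fun u => L u * Real.cos (θ - u)) (2*π) := by
    intro x
    simp only
    rw [L_periodic x, show θ - (x + 2*π) = (θ - x) - 2*π by ring, Real.cos_sub_two_pi]
  have hper := hH.intervalIntegral_add_eq (θ - π) (-π)
  rw [show θ - -π = (θ - π) + 2*π by ring]
  rw [hper]
  rw [show -π + 2*π = π by ring]
  have hsplit : Set.EqOn (fun u => L u * Real.cos (θ - u))
      (fun u => Real.cos θ * (L u * Real.cos u) + Real.sin θ * (L u * Real.sin u))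
      (Set.uIcc (-π) π) := by
    intro u _; simp only [Real.cos_sub]; ring
  rw [integral_congr hsplit,
    integral_add ((L_cos_ii (-π) π).const_mul _) ((L_sin_ii (-π) π).const_mul _),
    integral_const_mul, integral_const_mul, J_cos, J_sin]
  ring

lemma I_sin (θ : ℝ) :
    ∫ η in (-π)..π, SLaux.L (θ - η) * Real.sin η = -(2*π) * Real.sin θ := by
  have h0 : (∫ η in (-π)..π, SLaux.L (θ - η) * Real.sin η)
      = ∫ η in (-π)..π, (fun u => L u * Real.sin (θ - u)) (θ - η) := by
    congr 1; funext η; simp only [sub_sub_cancel]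
  rw [h0, integral_comp_sub_left (fun u => L u * Real.sin (θ - u)) θ]
  have hH : Function.Periodic (fun u => L u * Real.sin (θ - u)) (2*π) := by
    intro x
    simp only
    rw [L_periodic x, show θ - (x + 2*π) = (θ - x) - 2*π by ring, Real.sin_sub_two_pi]
  have hper := hH.intervalIntegral_add_eq (θ - π) (-π)
  rw [show θ - -π = (θ - π) + 2*π by ring]
  rw [hper]
  rw [show -π + 2*π = π by ring]
  have hsplit : Set.EqOn (fun u => L u * Real.sin (θ - u))
      (fun u => Real.sin θ * (L u * Real.cos u) + (-Real.cos θ) * (L u * Real.sin u))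
      (Set.uIcc (-π) π) := by
    intro u _; simp only [Real.sin_sub]; ring
  rw [integral_congr hsplit,
    integral_add ((L_cos_ii (-π) π).const_mul _) ((L_sin_ii (-π) π).const_mul _),
    integral_const_mul, integral_const_mul, J_cos, J_sin]
  ring

end SLaux

open SLaux in


private lemma alg {S a b c s lg : ℝ} (hz : S ≠ 0) (hdot : a*c + b*s = -S/2) :
    1/(4*π) * (-(lg/2) * 1 + a*a/S) * c + 1/(4*π) * (-(lg/2) * 0 + a*b/S) * s
      = 1/(8*π) * (-(lg*c) - a) := by
  have hπ : π ≠ 0 := Real.pi_ne_zero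
  field_simp
  linear_combination (16*a) * hdot

private lemma alg2 {S a b c s lg : ℝ} (hz : S ≠ 0) (hdot : a*c + b*s = -S/2) :
    1/(4*π) * (-(lg/2) * 0 + b*a/S) * c + 1/(4*π) * (-(lg/2) * 1 + b*b/S) * s
      = 1/(8*π) * (-(lg*s) - b) := by
  have hπ : π ≠ 0 := Real.pi_ne_zero
  field_simp
  linear_combination (16*b) * hdot


/-- The 2D Stokeslet as a matrix-valued function of `x ∈ ℝ²`:
`G(x) = (1/(4π))(−log|x|·I + (x⊗x)/|x|²)`. -/
noncomputable def stokeslet (x : Fin 2 → ℝ) : Matrix (Fin 2) (Fin 2) ℝ :=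
  Matrix.of fun i j =>
    (1 / (4 * π)) *
      (-(Real.log (Real.sqrt (x 0 ^ 2 + x 1 ^ 2))) * (if i = j then 1 else 0) +
        x i * x j / (x 0 ^ 2 + x 1 ^ 2))

/-- The counterclockwise unit-circle parametrization `X⋆(θ) = (cos θ, sin θ)`. -/
noncomputable def Xstar (θ : ℝ) : Fin 2 → ℝ := ![Real.cos θ, Real.sin θ]


lemma hS_eq (θ η : ℝ) : (Real.cos θ - Real.cos η) ^ 2 + (Real.sin θ - Real.sin η) ^ 2
    = 2 - 2 * Real.cos (θ - η) := by
  rw [Real.cos_sub]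
  linear_combination Real.sin_sq_add_cos_sq θ + Real.sin_sq_add_cos_sq η

lemma hdot_eq (θ η : ℝ) :
    (Real.cos θ - Real.cos η) * Real.cos η + (Real.sin θ - Real.sin η) * Real.sin η
      = -((Real.cos θ - Real.cos η) ^ 2 + (Real.sin θ - Real.sin η) ^ 2)/2 := by
  linear_combination (1/2) * Real.sin_sq_add_cos_sq θ - (1/2) * Real.sin_sq_add_cos_sq η

lemma comp0 (θ η : ℝ) : (stokeslet (Xstar θ - Xstar η)).mulVec (Xstar η) 0
    = 1/(8*π) * (-(SLaux.L (θ - η) * Real.cos η) - (Real.cos θ - Real.cos η)) := by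
  simp only [stokeslet, Xstar, Matrix.mulVec, dotProduct, Fin.sum_univ_two,
    Matrix.of_apply, Pi.sub_apply, Matrix.cons_val_zero, Matrix.cons_val_one, Matrix.head_cons,
    if_true, if_false, SLaux.L]
  rw [if_neg (by decide : ¬(0:Fin 2) = 1)]
  rw [← hS_eq θ η]
  set S := (Real.cos θ - Real.cos η) ^ 2 + (Real.sin θ - Real.sin η) ^ 2 with hSdef
  have hS0 : (0:ℝ) ≤ S := by rw [hSdef]; positivity
  rw [Real.log_sqrt hS0]
  by_cases hz : S = 0
  · have h1 : Real.cos θ - Real.cos η = 0 := by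
      have : (Real.cos θ - Real.cos η)^2 = 0 := by nlinarith [sq_nonneg (Real.sin θ - Real.sin η), sq_nonneg (Real.cos θ - Real.cos η), hz.symm ▸ hS0]
      exact pow_eq_zero_iff two_ne_zero |>.mp this
    rw [hz, Real.log_zero, h1]
    simp
  · exact alg hz (hdot_eq θ η)

lemma comp1 (θ η : ℝ) : (stokeslet (Xstar θ - Xstar η)).mulVec (Xstar η) 1
    = 1/(8*π) * (-(SLaux.L (θ - η) * Real.sin η) - (Real.sin θ - Real.sin η)) := by
  simp only [stokeslet, Xstar, Matrix.mulVec, dotProduct, Fin.sum_univ_two,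
    Matrix.of_apply, Pi.sub_apply, Matrix.cons_val_zero, Matrix.cons_val_one, Matrix.head_cons,
    if_true, if_false, SLaux.L]
  rw [if_neg (by decide : ¬(1:Fin 2) = 0)]
  rw [← hS_eq θ η]
  set S := (Real.cos θ - Real.cos η) ^ 2 + (Real.sin θ - Real.sin η) ^ 2 with hSdef
  have hS0 : (0:ℝ) ≤ S := by rw [hSdef]; positivity
  rw [Real.log_sqrt hS0]
  by_cases hz : S = 0
  · have h1 : Real.sin θ - Real.sin η = 0 := by
      have : (Real.sin θ - Real.sin η)^2 = 0 := by nlinarith [sq_nonneg (Real.sin θ - Real.sin η), sq_nonneg (Real.cos θ - Real.cos η), hz.symm ▸ hS0]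
      exact pow_eq_zero_iff two_ne_zero |>.mp this
    rw [hz, Real.log_zero, h1]
    simp
  · exact alg2 hz (hdot_eq θ η)


theorem singleLayer_circle_velocity_zero (θ : ℝ) :
    IntervalIntegrable (fun η => (stokeslet (Xstar θ - Xstar η)).mulVec (Xstar η))
        MeasureTheory.volume (-π) π ∧
    ∫ η in (-π)..π, (stokeslet (Xstar θ - Xstar η)).mulVec (-(Xstar η)) = 0 := by
  have hL := SLaux.L_shift_ii θ
  have h0 : IntervalIntegrable (fun η => SLaux.L (θ - η) * Real.cos η)
      MeasureTheory.volume (-π) π := hL.mul_continuousOn continuous_cos.continuousOn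
  have h1 : IntervalIntegrable (fun η => SLaux.L (θ - η) * Real.sin η)
      MeasureTheory.volume (-π) π := hL.mul_continuousOn continuous_sin.continuousOn
  have hc0 : IntervalIntegrable (fun η : ℝ => Real.cos θ - Real.cos η)
      MeasureTheory.volume (-π) π :=
    (continuous_const.sub continuous_cos).intervalIntegrable _ _
  have hc1 : IntervalIntegrable (fun η : ℝ => Real.sin θ - Real.sin η)
      MeasureTheory.volume (-π) π :=
    (continuous_const.sub continuous_sin).intervalIntegrable _ _
  have hF0i : IntervalIntegrable
      (fun η => 1/(8*π) * (-(SLaux.L (θ - η) * Real.cos η) - (Real.cos θ - Real.cos η)))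
      MeasureTheory.volume (-π) π := (h0.neg.sub hc0).const_mul _
  have hF1i : IntervalIntegrable
      (fun η => 1/(8*π) * (-(SLaux.L (θ - η) * Real.sin η) - (Real.sin θ - Real.sin η)))
      MeasureTheory.volume (-π) π := (h1.neg.sub hc1).const_mul _
  have hkey : (fun η => (stokeslet (Xstar θ - Xstar η)).mulVec (Xstar η))
      = fun η => (1/(8*π) * (-(SLaux.L (θ - η) * Real.cos η) - (Real.cos θ - Real.cos η)))
            • (![1,0] : Fin 2 → ℝ)
          + (1/(8*π) * (-(SLaux.L (θ - η) * Real.sin η) - (Real.sin θ - Real.sin η)))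
            • (![0,1] : Fin 2 → ℝ) := by
    funext η i
    fin_cases i
    · simpa using comp0 θ η
    · simpa using comp1 θ η
  have hs0 : IntervalIntegrable
      (fun η => (1/(8*π) * (-(SLaux.L (θ - η) * Real.cos η) - (Real.cos θ - Real.cos η)))
          • (![1,0] : Fin 2 → ℝ)) MeasureTheory.volume (-π) π :=
    ⟨hF0i.1.smul_const _, hF0i.2.smul_const _⟩
  have hs1 : IntervalIntegrable
      (fun η => (1/(8*π) * (-(SLaux.L (θ - η) * Real.sin η) - (Real.sin θ - Real.sin η)))
          • (![0,1] : Fin 2 → ℝ)) MeasureTheory.volume (-π) π :=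
    ⟨hF1i.1.smul_const _, hF1i.2.smul_const _⟩
  have hInt : IntervalIntegrable (fun η => (stokeslet (Xstar θ - Xstar η)).mulVec (Xstar η))
      MeasureTheory.volume (-π) π := by
    rw [hkey]; exact hs0.add hs1
  refine ⟨hInt, ?_⟩
  have h0n : IntervalIntegrable (fun η => -(SLaux.L (θ - η) * Real.cos η))
      MeasureTheory.volume (-π) π := ⟨h0.1.neg, h0.2.neg⟩
  have h1n : IntervalIntegrable (fun η => -(SLaux.L (θ - η) * Real.sin η))
      MeasureTheory.volume (-π) π := ⟨h1.1.neg, h1.2.neg⟩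
  have hIF0 : (∫ η in (-π)..π,
      1/(8*π) * (-(SLaux.L (θ - η) * Real.cos η) - (Real.cos θ - Real.cos η))) = 0 := by
    rw [integral_const_mul, integral_sub h0n hc0, intervalIntegral.integral_neg,
      SLaux.I_cos θ, integral_sub (continuous_const.intervalIntegrable _ _)
        (continuous_cos.intervalIntegrable _ _), integral_const, integral_cos]
    simp only [smul_eq_mul, Real.sin_pi, Real.sin_neg]
    ring
  have hIF1 : (∫ η in (-π)..π,
      1/(8*π) * (-(SLaux.L (θ - η) * Real.sin η) - (Real.sin θ - Real.sin η))) = 0 := by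
    rw [integral_const_mul, integral_sub h1n hc1, intervalIntegral.integral_neg,
      SLaux.I_sin θ, integral_sub (continuous_const.intervalIntegrable _ _)
        (continuous_sin.intervalIntegrable _ _), integral_const, integral_sin]
    simp only [smul_eq_mul, Real.cos_neg]
    ring
  simp only [Matrix.mulVec_neg]
  rw [intervalIntegral.integral_neg, hkey,
    integral_add hs0 hs1, intervalIntegral.integral_smul_const, intervalIntegral.integral_smul_const, hIF0, hIF1]
  simp
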